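/- Let ν > 0 and 0 ≤ γ₁ < γ₂ with √γ₂ − √γ₁ ≤ ν and 3γ₁ + γ₂ > ν². Set κ = ν/2 − (γ₂ − γ₁)/(2√(2(γ₁+γ₂) − ν²)), p₁₂ = ν/2 and p₂₂ = (γ₁+γ₂)/2. Then κ ∈ [0, ν/2], P = [[1,p₁₂],[p₁₂,p₂₂]] is symmetric positive definite, and Q_γ P + P Q_γᵀ − 2κ P is positive semi-definite for all γ ∈ [γ₁,γ₂], where Q_γ = [[0,1],[−γ,ν]]. -/

import Mathlib

open Matrix

lemma herm_fin_two (a b c : ℝ) :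
    (!![a, b; b, c] : Matrix (Fin 2) (Fin 2) ℝ).IsHermitian := by
  show _ᴴ = _
  ext i j
  fin_cases i <;> fin_cases j <;> simp [Matrix.conjTranspose_apply]

lemma psd_fin_two {a b c : ℝ} (ha : 0 < a) (hd : b ^ 2 ≤ a * c) :
    (!![a, b; b, c] : Matrix (Fin 2) (Fin 2) ℝ).PosSemidef := by
  refine Matrix.PosSemidef.of_dotProduct_mulVec_nonneg (herm_fin_two a b c) fun x => ?_
  simp only [Matrix.mulVec, dotProduct, Fin.sum_univ_two, RCLike.re_to_real,
    Matrix.of_apply, Matrix.cons_val', Matrix.cons_val_zero, Matrix.cons_val_one,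
    Matrix.head_cons, Matrix.empty_val', Matrix.cons_val_fin_one, Matrix.head_fin_const,
    Pi.star_apply, star_trivial]
  nlinarith [sq_nonneg (a * x 0 + b * x 1), mul_pos ha ha, sq_nonneg (x 1),
    mul_nonneg (mul_nonneg ha.le (sq_nonneg (x 1))) (sub_nonneg.mpr hd)]

lemma pd_fin_two {a b c : ℝ} (ha : 0 < a) (hd : b ^ 2 < a * c) :
    (!![a, b; b, c] : Matrix (Fin 2) (Fin 2) ℝ).PosDef := by
  refine Matrix.PosDef.of_dotProduct_mulVec_pos (herm_fin_two a b c) fun x hx => ?_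
  have hx01 : x 0 ≠ 0 ∨ x 1 ≠ 0 := by
    by_contra h
    push_neg at h
    apply hx
    ext i
    fin_cases i <;> simp [h.1, h.2]
  simp only [Matrix.mulVec, dotProduct, Fin.sum_univ_two, RCLike.re_to_real,
    Matrix.of_apply, Matrix.cons_val', Matrix.cons_val_zero, Matrix.cons_val_one,
    Matrix.head_cons, Matrix.empty_val', Matrix.cons_val_fin_one, Matrix.head_fin_const,
    Pi.star_apply, star_trivial]
  rcases hx01 with h0 | h1
  · rcases eq_or_ne (x 1) 0 with h1 | h1
    · rw [h1]
      have h2 : 0 < x 0 ^ 2 := by positivity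
      nlinarith [mul_pos ha h2]
    · have h2 : 0 < x 1 ^ 2 := by positivity
      nlinarith [sq_nonneg (a * x 0 + b * x 1), mul_pos (mul_pos ha h2) (sub_pos.mpr hd), ha]
  · have h2 : 0 < x 1 ^ 2 := by positivity
    nlinarith [sq_nonneg (a * x 0 + b * x 1), mul_pos (mul_pos ha h2) (sub_pos.mpr hd), ha]

set_option maxHeartbeats 1600000 in
/-- explicit admissible matrices in the case `3γ₁ + γ₂ > ν²`. -/
theorem stmt11 (ν γ₁ γ₂ : ℝ) (hν : 0 < ν) (hγ₁ : 0 ≤ γ₁) (hγ : γ₁ < γ₂)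
    (hres : Real.sqrt γ₂ - Real.sqrt γ₁ ≤ ν) (hcone : ν ^ 2 < 3 * γ₁ + γ₂) :
    let κ : ℝ := ν / 2 - (γ₂ - γ₁) / (2 * Real.sqrt (2 * (γ₁ + γ₂) - ν ^ 2))
    let p12 : ℝ := ν / 2
    let p22 : ℝ := (γ₁ + γ₂) / 2
    κ ∈ Set.Icc (0 : ℝ) (ν / 2) ∧
    (!![1, p12; p12, p22] : Matrix (Fin 2) (Fin 2) ℝ).PosDef ∧
    ∀ γ ∈ Set.Icc γ₁ γ₂,
      ((!![0, 1; -γ, ν] : Matrix (Fin 2) (Fin 2) ℝ) * !![1, p12; p12, p22]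
        + !![1, p12; p12, p22] * (!![0, 1; -γ, ν] : Matrix (Fin 2) (Fin 2) ℝ)ᵀ
        - (2 * κ) • !![1, p12; p12, p22]).PosSemidef := by
  intro κ p12 p22
  -- basic facts about s = √(2(γ₁+γ₂) − ν²)
  set s : ℝ := Real.sqrt (2 * (γ₁ + γ₂) - ν ^ 2) with hs_def
  have hspos_arg : (0 : ℝ) < 2 * (γ₁ + γ₂) - ν ^ 2 := by linarith
  have hs2 : s ^ 2 = 2 * (γ₁ + γ₂) - ν ^ 2 := Real.sq_sqrt hspos_arg.le
  have hs0 : 0 < s := Real.sqrt_pos.mpr hspos_arg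
  -- facts about the square roots of γ₁ and γ₂
  set a : ℝ := Real.sqrt γ₁ with ha_def
  set b : ℝ := Real.sqrt γ₂ with hb_def
  have ha2 : a ^ 2 = γ₁ := Real.sq_sqrt hγ₁
  have hb2 : b ^ 2 = γ₂ := Real.sq_sqrt (hγ₁.trans hγ.le)
  have ha0 : 0 ≤ a := Real.sqrt_nonneg _
  have hb0 : 0 ≤ b := Real.sqrt_nonneg _
  have hab : a < b := Real.sqrt_lt_sqrt hγ₁ hγ
  -- key inequality : γ₂ − γ₁ ≤ ν * s
  have h1 : ν ^ 2 ≤ (a + b) ^ 2 := by nlinarith [mul_nonneg ha0 (sub_nonneg.mpr hab.le)]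
  have h2 : (b - a) ^ 2 ≤ ν ^ 2 := by nlinarith [sub_nonneg.mpr hab.le]
  have hsq : (γ₂ - γ₁) ^ 2 ≤ (ν * s) ^ 2 := by
    nlinarith [mul_nonneg (sub_nonneg.mpr h1) (sub_nonneg.mpr h2)]
  have hkey : γ₂ - γ₁ ≤ ν * s := by
    nlinarith [hsq, mul_pos hν hs0]
  have hκ0 : 0 ≤ κ := by
    have hdiv : (γ₂ - γ₁) / (2 * s) ≤ ν / 2 := by
      rw [div_le_div_iff₀ (by linarith) (by norm_num)]
      linarith
    simp only [κ]
    linarith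
  have hκν : κ ≤ ν / 2 := by
    have : 0 ≤ (γ₂ - γ₁) / (2 * s) :=
      div_nonneg (by linarith) (by linarith)
    simp only [κ]
    linarith
  refine ⟨⟨hκ0, hκν⟩, ?_, ?_⟩
  · -- positive definiteness of P
    apply pd_fin_two one_pos
    simp only [p12, p22]
    nlinarith
  · -- the semidefiniteness for all γ ∈ [γ₁, γ₂]
    intro γ hγmem
    obtain ⟨hγl, hγr⟩ := hγmem
    have hmat : (!![0, 1; -γ, ν] : Matrix (Fin 2) (Fin 2) ℝ) * !![1, p12; p12, p22]
        + !![1, p12; p12, p22] * (!![0, 1; -γ, ν] : Matrix (Fin 2) (Fin 2) ℝ)ᵀ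
        - (2 * κ) • !![1, p12; p12, p22]
        = !![ν - 2 * κ, p22 - γ + ν * p12 - 2 * κ * p12;
             p22 - γ + ν * p12 - 2 * κ * p12,
             2 * (-γ * p12 + ν * p22) - 2 * κ * p22] := by
      ext i j
      fin_cases i <;> fin_cases j <;>
        simp [Matrix.mul_apply, Fin.sum_univ_two, Matrix.vecHead, Matrix.vecTail, Matrix.vecMul, dotProduct] <;> ring
    rw [hmat]
    -- express κ through s
    have hks : 2 * κ * s = ν * s - (γ₂ - γ₁) := by
      simp only [κ]
      field_simp
      ring
    have hA : 0 < ν - 2 * κ := by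
      have h3 : 2 * κ * s < ν * s := by rw [hks]; linarith
      nlinarith [h3, hs0]
    apply psd_fin_two hA
    -- determinant identity: A*C − B² = (γ−γ₁)(γ₂−γ) ≥ 0
    have hACs : s ^ 2 * ((ν - 2 * κ) * (2 * (-γ * p12 + ν * p22) - 2 * κ * p22)
        - (p22 - γ + ν * p12 - 2 * κ * p12) ^ 2)
        = s ^ 2 * ((γ - γ₁) * (γ₂ - γ)) := by
      simp only [p12, p22]
      linear_combination (-(s ^ 2 * (s * (ν - 2 * κ) + (γ₂ - γ₁))) / 4) * hks
        + (-((ν - 2 * κ) ^ 2 * s ^ 2) / 4) * hs2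
    have hs2ne : s ^ 2 ≠ 0 := by positivity
    have hdet := mul_left_cancel₀ hs2ne hACs
    nlinarith [hdet, mul_nonneg (sub_nonneg.mpr hγl) (sub_nonneg.mpr hγr)]
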